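/- (First Abel inversion theorem.) Let a, g : ℕ → ℝ with a_0 = g_0 = 1 and let m be an integer. For an integer p and s ≥ 0, write P_s^{(p)}(g) = ∑_{μ ⊢ s} (p)_{ν_μ} d_μ g_μ, with P_0^{(p)}(g) = 1. Then the following are equivalent: (i) for every i ≥ 1, a_i = ∑_{j=0}^{i−1} binom(i−1,j) g_{j+1} P_{i−1−j}^{(m)}(g); (ii) for every i ≥ 1, g_i = ∑_{j=0}^{i−1} binom(i−1,j) a_{j+1} P_{i−1−j}^{(−m)}(g). -/

import Mathlib

open Finset Polynomial

/-- `dcoef μ = s! / ((1!)^{r_1}(2!)^{r_2}⋯ r_1! r_2! ⋯)`, the number of set partitions of an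
`s`-element set whose block sizes are the parts of the integer partition `μ`. -/
noncomputable def dcoef {s : ℕ} (mu : Nat.Partition s) : ℝ :=
  (Nat.factorial s : ℝ) /
    ((mu.parts.map fun p => (Nat.factorial p : ℝ)).prod *
     ∏ j ∈ mu.parts.toFinset, (Nat.factorial (mu.parts.count j) : ℝ))

lemma dp_add_one (k : ℕ) (x : ℝ) :
    (descPochhammer ℝ k).eval (x + 1) =
      (descPochhammer ℝ k).eval x + k * (descPochhammer ℝ (k - 1)).eval x := by
  cases k with
  | zero => simp
  | succ n =>
    have h1 : (descPochhammer ℝ (n+1)).eval (x+1) = (x+1) * (descPochhammer ℝ n).eval x := by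
      rw [descPochhammer_succ_left]
      simp [eval_comp]
    rw [h1, descPochhammer_succ_eval]
    simp only [Nat.add_sub_cancel]
    push_cast
    ring

def pcons (t : ℕ) {s : ℕ} (ht : 0 < t) (hts : t ≤ s) (mu : Nat.Partition (s - t)) :
    Nat.Partition s where
  parts := t ::ₘ mu.parts
  parts_pos := by
    intro i hi
    rcases Multiset.mem_cons.1 hi with h | h
    · subst h; exact ht
    · exact mu.parts_pos h
  parts_sum := by
    rw [Multiset.sum_cons, mu.parts_sum]
    omega

@[simp] lemma pcons_parts (t : ℕ) {s : ℕ} (ht : 0 < t) (hts : t ≤ s)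
    (mu : Nat.Partition (s - t)) : (pcons t ht hts mu).parts = t ::ₘ mu.parts := rfl

def perase (t : ℕ) {s : ℕ} (mu : Nat.Partition s) (h : t ∈ mu.parts) :
    Nat.Partition (s - t) where
  parts := mu.parts.erase t
  parts_pos := fun hi => mu.parts_pos (Multiset.mem_of_mem_erase hi)
  parts_sum := by
    have h1 : t + (mu.parts.erase t).sum = mu.parts.sum := Multiset.sum_erase h
    have h2 := mu.parts_sum
    omega

lemma prod_count_factorial_cons (t : ℕ) (P0 : Multiset ℕ) :
    ∏ j ∈ (t ::ₘ P0).toFinset, ((t ::ₘ P0).count j).factorial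
      = (P0.count t + 1) * ∏ j ∈ P0.toFinset, (P0.count j).factorial := by
  rw [Multiset.toFinset_cons]
  by_cases h : t ∈ P0.toFinset
  · rw [Finset.insert_eq_self.2 h]
    rw [← Finset.mul_prod_erase _ (fun j => ((t ::ₘ P0).count j).factorial) h,
        ← Finset.mul_prod_erase _ (fun j => (P0.count j).factorial) h]
    have h2 : ∀ j ∈ P0.toFinset.erase t, ((t ::ₘ P0).count j).factorial
        = (P0.count j).factorial := by
      intro j hj
      rw [Multiset.count_cons_of_ne (Finset.ne_of_mem_erase hj) _]
    rw [Finset.prod_congr rfl h2, Multiset.count_cons_self, Nat.factorial_succ]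
    ring
  · rw [Finset.prod_insert h]
    have ht0 : P0.count t = 0 := Multiset.count_eq_zero_of_notMem
      (fun hm => h (Multiset.mem_toFinset.2 hm))
    have h2 : ∀ j ∈ P0.toFinset, ((t ::ₘ P0).count j).factorial
        = (P0.count j).factorial := by
      intro j hj
      rw [Multiset.count_cons_of_ne (by rintro rfl; exact h hj) _]
    rw [Finset.prod_congr rfl h2, Multiset.count_cons_self, ht0]
    simp [Nat.factorial]

lemma dcoef_pcons {s t : ℕ} (ht : 0 < t) (hts : t ≤ s) (mu : Nat.Partition (s - t)) :
    ((mu.parts.count t : ℝ) + 1) * dcoef (pcons t ht hts mu)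
      = (s.choose t : ℝ) * dcoef mu := by
  have hA : (0:ℝ) < (mu.parts.map fun p => (Nat.factorial p : ℝ)).prod := by
    apply Multiset.prod_pos
    intro x hx
    rcases Multiset.mem_map.1 hx with ⟨p, _, rfl⟩
    exact_mod_cast p.factorial_pos
  have hB : (0:ℝ) < ∏ j ∈ mu.parts.toFinset, (Nat.factorial (mu.parts.count j) : ℝ) := by
    apply Finset.prod_pos
    intro j _
    exact_mod_cast (mu.parts.count j).factorial_pos
  have hfac : ((pcons t ht hts mu).parts.map fun p => (Nat.factorial p : ℝ)).prod
      = (t.factorial : ℝ) * (mu.parts.map fun p => (Nat.factorial p : ℝ)).prod := by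
    show ((t ::ₘ mu.parts).map fun p => (Nat.factorial p : ℝ)).prod = _
    rw [Multiset.map_cons, Multiset.prod_cons]
  have hcnt : (∏ j ∈ (pcons t ht hts mu).parts.toFinset,
        (Nat.factorial ((pcons t ht hts mu).parts.count j) : ℝ))
      = ((mu.parts.count t : ℝ) + 1) *
        ∏ j ∈ mu.parts.toFinset, (Nat.factorial (mu.parts.count j) : ℝ) := by
    show (∏ j ∈ (t ::ₘ mu.parts).toFinset, (Nat.factorial ((t ::ₘ mu.parts).count j) : ℝ)) = _
    have := prod_count_factorial_cons t mu.parts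
    have := congrArg (fun n : ℕ => (n : ℝ)) this
    push_cast at this
    simpa using this
  have hs : (s.factorial : ℝ) = (s.choose t : ℝ) * (t.factorial : ℝ) * ((s-t).factorial : ℝ) := by
    exact_mod_cast (Nat.choose_mul_factorial_mul_factorial hts).symm
  rw [dcoef, dcoef, hfac, hcnt, hs]
  have hc1 : ((mu.parts.count t : ℝ) + 1) ≠ 0 := by positivity
  field_simp

noncomputable def Vfun (P : ℤ → ℕ → ℝ) (p q : ℤ) (N : ℕ) : ℝ :=
  ∑ l ∈ range (N+1), (N.choose l : ℝ) * P p l * P q (N - l)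

lemma triangle1 (n : ℕ) (f : ℕ → ℕ → ℝ) :
    ∑ l ∈ range (n+1), ∑ t ∈ range (l+1), f l t
      = ∑ t ∈ range (n+1), ∑ u ∈ range (n+1-t), f (t+u) t := by
  rw [Finset.sum_comm' (s' := fun t => Finset.Ico t (n+1)) (t' := range (n+1))
    (fun l t => by simp only [Finset.mem_range, Finset.mem_Ico]; omega)]
  apply Finset.sum_congr rfl
  intro t _
  rw [Finset.sum_Ico_eq_sum_range]

lemma triangle2 (n : ℕ) (f : ℕ → ℕ → ℝ) :
    ∑ l ∈ range (n+1), ∑ t ∈ range (n+1-l), f l t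
      = ∑ t ∈ range (n+1), ∑ l ∈ range (n+1-t), f l t := by
  rw [Finset.sum_comm' (s' := fun t => range (n+1-t)) (t' := range (n+1))
    (fun l t => by simp only [Finset.mem_range]; omega)]

lemma chooseid {N l t : ℕ} (h : l + t ≤ N) :
    N.choose l * (N-l).choose t = N.choose t * (N-t).choose l := by
  have h1 := Nat.choose_mul (n := N) (show l ≤ l + t by omega)
  have h2 := Nat.choose_mul (n := N) (show t ≤ t + l by omega)
  have h3 : (l+t).choose l = (l+t).choose t := Nat.choose_symm_add
  simp only [Nat.add_sub_cancel_left] at h1 h2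
  rw [Nat.add_comm t l] at h2
  rw [← h1, ← h2, h3]

section
variable (g : ℕ → ℝ) (P : ℤ → ℕ → ℝ)
variable (hP : ∀ (p : ℤ) (s : ℕ), P p s = ∑ mu : Nat.Partition s,
      (descPochhammer ℝ mu.parts.card).eval ((p : ℝ)) * dcoef mu * (mu.parts.map g).prod)

include hP in
lemma P_p_zero (p : ℤ) : P p 0 = 1 := by
  rw [hP]
  rw [Fintype.sum_unique]
  simp [dcoef]

include hP in
lemma P_zero_val (s : ℕ) : P 0 s = if s = 0 then 1 else 0 := by
  rcases Nat.eq_zero_or_pos s with rfl | hs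
  · simp [P_p_zero g P hP]
  · rw [hP, if_neg (by omega)]
    apply Finset.sum_eq_zero
    intro mu _
    have hc : mu.parts.card ≠ 0 := by
      intro h
      have : mu.parts = 0 := Multiset.card_eq_zero.1 h
      have h2 := mu.parts_sum
      rw [this] at h2
      simp at h2
      omega
    rw [show ((0:ℤ):ℝ) = 0 by norm_num, descPochhammer_ne_zero_eval_zero (R := ℝ) hc]
    ring
include hP in
lemma P_rec (hg0 : g 0 = 1) (p : ℤ) (s : ℕ) :
    P (p+1) s = ∑ t ∈ range (s+1), (s.choose t : ℝ) * g t * P p (s - t) := by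
  have key : ∀ t, 0 < t → t ≤ s →
      (s.choose t : ℝ) * g t * P p (s - t)
        = ∑ mu ∈ univ.filter (fun mu : Nat.Partition s => t ∈ mu.parts),
            (mu.parts.count t : ℝ) *
              ((descPochhammer ℝ (Multiset.card mu.parts - 1)).eval ((p:ℝ)) * dcoef mu *
                (mu.parts.map g).prod) := by
    intro t ht hts
    rw [hP, Finset.mul_sum]
    refine Finset.sum_bij' (fun (mu' : Nat.Partition (s-t)) _ => pcons t ht hts mu')
      (fun mu hmu => perase t mu (by simpa using (Finset.mem_filter.1 hmu).2))
      (fun mu' _ => by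
        simp only [Finset.mem_filter, Finset.mem_univ, true_and]
        exact Multiset.mem_cons_self t _)
      (fun mu _ => Finset.mem_univ _)
      (fun mu' _ => by
        apply Nat.Partition.ext
        show (t ::ₘ mu'.parts).erase t = mu'.parts
        exact Multiset.erase_cons_head t _)
      (fun mu hmu => by
        apply Nat.Partition.ext
        show t ::ₘ mu.parts.erase t = mu.parts
        exact Multiset.cons_erase (by simpa using (Finset.mem_filter.1 hmu).2))
      ?_
    intro mu' _
    have e1 : (pcons t ht hts mu').parts.count t = mu'.parts.count t + 1 := by
      show (t ::ₘ mu'.parts).count t = _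
      exact Multiset.count_cons_self t _
    have e2 : Multiset.card (pcons t ht hts mu').parts = Multiset.card mu'.parts + 1 := by
      show Multiset.card (t ::ₘ mu'.parts) = _
      exact Multiset.card_cons t _
    have e3 : ((pcons t ht hts mu').parts.map g).prod = g t * (mu'.parts.map g).prod := by
      show ((t ::ₘ mu'.parts).map g).prod = _
      rw [Multiset.map_cons, Multiset.prod_cons]
    have e4 := dcoef_pcons ht hts mu'
    rw [e1, e2, e3]
    simp only [Nat.add_sub_cancel, Nat.cast_add, Nat.cast_one]
    linear_combination (-((descPochhammer ℝ (Multiset.card mu'.parts)).eval ((p:ℝ))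
      * (mu'.parts.map g).prod * g t)) * e4
  -- now the main chain
  have step1 : P (p+1) s = P p s +
      ∑ mu : Nat.Partition s, (Multiset.card mu.parts : ℝ) *
        ((descPochhammer ℝ (Multiset.card mu.parts - 1)).eval ((p:ℝ)) * dcoef mu *
          (mu.parts.map g).prod) := by
    rw [hP (p+1) s, hP p s, ← Finset.sum_add_distrib]
    apply Finset.sum_congr rfl
    intro mu _
    have : ((p + 1 : ℤ) : ℝ) = (p : ℝ) + 1 := by push_cast; ring
    rw [this, dp_add_one]
    ring
  have step2 : ∀ mu : Nat.Partition s, (Multiset.card mu.parts : ℝ) *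
        ((descPochhammer ℝ (Multiset.card mu.parts - 1)).eval ((p:ℝ)) * dcoef mu *
          (mu.parts.map g).prod)
      = ∑ t ∈ mu.parts.toFinset, (mu.parts.count t : ℝ) *
        ((descPochhammer ℝ (Multiset.card mu.parts - 1)).eval ((p:ℝ)) * dcoef mu *
          (mu.parts.map g).prod) := by
    intro mu
    rw [← Finset.sum_mul]
    congr 1
    rw [← Nat.cast_sum]
    exact_mod_cast congrArg (fun n : ℕ => (n : ℝ)) (Multiset.toFinset_sum_count_eq mu.parts).symm
  have step3 : (∑ mu : Nat.Partition s, ∑ t ∈ mu.parts.toFinset,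
        (mu.parts.count t : ℝ) *
        ((descPochhammer ℝ (Multiset.card mu.parts - 1)).eval ((p:ℝ)) * dcoef mu *
          (mu.parts.map g).prod))
      = ∑ t ∈ Finset.Ico 1 (s+1), ∑ mu ∈ univ.filter
          (fun mu : Nat.Partition s => t ∈ mu.parts),
        (mu.parts.count t : ℝ) *
        ((descPochhammer ℝ (Multiset.card mu.parts - 1)).eval ((p:ℝ)) * dcoef mu *
          (mu.parts.map g).prod) := by
    apply Finset.sum_comm'
    intro mu t
    constructor
    · rintro ⟨-, hm⟩
      have h := Multiset.mem_toFinset.1 hm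
      have h1 := mu.parts_pos h
      have h3 := Multiset.le_sum_of_mem h
      have h4 := mu.parts_sum
      exact ⟨Finset.mem_filter.2 ⟨Finset.mem_univ _, h⟩,
        Finset.mem_Ico.2 ⟨by omega, by omega⟩⟩
    · rintro ⟨hm, -⟩
      exact ⟨Finset.mem_univ _, Multiset.mem_toFinset.2 (Finset.mem_filter.1 hm).2⟩
  calc P (p+1) s
      = P p s + ∑ mu : Nat.Partition s, (Multiset.card mu.parts : ℝ) *
          ((descPochhammer ℝ (Multiset.card mu.parts - 1)).eval ((p:ℝ)) * dcoef mu *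
            (mu.parts.map g).prod) := step1
    _ = P p s + ∑ mu : Nat.Partition s, ∑ t ∈ mu.parts.toFinset,
          (mu.parts.count t : ℝ) *
          ((descPochhammer ℝ (Multiset.card mu.parts - 1)).eval ((p:ℝ)) * dcoef mu *
            (mu.parts.map g).prod) := by
        rw [Finset.sum_congr rfl (fun mu _ => step2 mu)]
    _ = P p s + ∑ t ∈ Finset.Ico 1 (s+1), ∑ mu ∈ univ.filter
          (fun mu : Nat.Partition s => t ∈ mu.parts),
          (mu.parts.count t : ℝ) *
          ((descPochhammer ℝ (Multiset.card mu.parts - 1)).eval ((p:ℝ)) * dcoef mu *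
            (mu.parts.map g).prod) := by rw [step3]
    _ = P p s + ∑ t ∈ Finset.Ico 1 (s+1), (s.choose t : ℝ) * g t * P p (s - t) := by
        congr 1
        apply Finset.sum_congr rfl
        intro t ht
        have h1 := Finset.mem_Ico.1 ht
        rw [← key t (by omega) (by omega)]
    _ = ∑ t ∈ range (s+1), (s.choose t : ℝ) * g t * P p (s - t) := by
        rw [Finset.range_eq_Ico,
          Finset.sum_eq_sum_Ico_succ_bot (show (0:ℕ) < s+1 by omega)
            (fun t => (s.choose t : ℝ) * g t * P p (s - t))]
        simp [hg0]
include hP in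
lemma Vshift (hg0 : g 0 = 1) (p q : ℤ) (N : ℕ) :
    Vfun P (p+1) q N = Vfun P p (q+1) N := by
  have hL : Vfun P (p+1) q N
      = ∑ t ∈ range (N+1), (N.choose t : ℝ) * g t * Vfun P p q (N - t) := by
    calc Vfun P (p+1) q N
        = ∑ l ∈ range (N+1), ∑ t ∈ range (l+1),
            (N.choose l:ℝ) * ((l.choose t:ℝ) * g t * P p (l-t)) * P q (N-l) := by
          unfold Vfun
          apply Finset.sum_congr rfl
          intro l _
          rw [P_rec g P hP hg0 p l, Finset.mul_sum, Finset.sum_mul]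
      _ = ∑ t ∈ range (N+1), ∑ u ∈ range (N+1-t),
            (N.choose (t+u):ℝ) * (((t+u).choose t:ℝ) * g t * P p (t+u-t)) * P q (N-(t+u)) :=
          triangle1 N _
      _ = ∑ t ∈ range (N+1), (N.choose t : ℝ) * g t * Vfun P p q (N - t) := by
          apply Finset.sum_congr rfl
          intro t ht
          have htN : t ≤ N := by simp only [Finset.mem_range] at ht; omega
          have hr : N + 1 - t = (N - t) + 1 := by omega
          rw [hr]
          unfold Vfun
          rw [Finset.mul_sum]
          apply Finset.sum_congr rfl
          intro u hu
          have hu' : u ≤ N - t := by simp only [Finset.mem_range] at hu; omega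
          have hch : N.choose (t+u) * ((t+u).choose t) = N.choose t * ((N-t).choose u) := by
            have := Nat.choose_mul (n := N) (show t ≤ t + u by omega)
            simpa [Nat.add_sub_cancel_left] using this
          have hc : ((N.choose (t+u) * ((t+u).choose t) : ℕ) : ℝ)
              = ((N.choose t * ((N-t).choose u) : ℕ) : ℝ) := by exact_mod_cast congrArg (fun n : ℕ => (n:ℝ)) hch
          push_cast at hc
          have e1 : t + u - t = u := by omega
          have e2 : N - (t+u) = (N-t) - u := by omega
          rw [e1, e2]
          linear_combination (g t * P p u * P q ((N-t) - u)) * hc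
  have hR : Vfun P p (q+1) N
      = ∑ t ∈ range (N+1), (N.choose t : ℝ) * g t * Vfun P p q (N - t) := by
    calc Vfun P p (q+1) N
        = ∑ l ∈ range (N+1), ∑ t ∈ range (N+1-l),
            (N.choose l:ℝ) * P p l * (((N-l).choose t:ℝ) * g t * P q (N-l-t)) := by
          unfold Vfun
          apply Finset.sum_congr rfl
          intro l hl
          have hlN : l ≤ N := by simp only [Finset.mem_range] at hl; omega
          rw [P_rec g P hP hg0 q (N-l), Finset.mul_sum]
          have hr : N - l + 1 = N + 1 - l := by omega
          rw [hr]
      _ = ∑ t ∈ range (N+1), ∑ l ∈ range (N+1-t),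
            (N.choose l:ℝ) * P p l * (((N-l).choose t:ℝ) * g t * P q (N-l-t)) :=
          triangle2 N _
      _ = ∑ t ∈ range (N+1), (N.choose t : ℝ) * g t * Vfun P p q (N - t) := by
          apply Finset.sum_congr rfl
          intro t ht
          have htN : t ≤ N := by simp only [Finset.mem_range] at ht; omega
          have hr : N + 1 - t = (N - t) + 1 := by omega
          rw [hr]
          unfold Vfun
          rw [Finset.mul_sum]
          apply Finset.sum_congr rfl
          intro l hl
          have hl' : l ≤ N - t := by simp only [Finset.mem_range] at hl; omega
          have hch := chooseid (show l + t ≤ N by omega)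
          have hc : ((N.choose l * ((N-l).choose t) : ℕ) : ℝ)
              = ((N.choose t * ((N-t).choose l) : ℕ) : ℝ) := by exact_mod_cast congrArg (fun n : ℕ => (n:ℝ)) hch
          push_cast at hc
          have e2 : N - l - t = (N-t) - l := by omega
          rw [e2]
          linear_combination (g t * P p l * P q ((N-t) - l)) * hc
  rw [hL, hR]

include hP in
lemma V00 (N : ℕ) : Vfun P 0 0 N = if N = 0 then 1 else 0 := by
  rcases Nat.eq_zero_or_pos N with rfl | hN
  · simp [Vfun, P_zero_val g P hP]
  · rw [if_neg (by omega)]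
    unfold Vfun
    apply Finset.sum_eq_zero
    intro l hl
    rcases Nat.eq_zero_or_pos l with rfl | hl'
    · rw [P_zero_val g P hP, P_zero_val g P hP]
      simp
      omega
    · rw [P_zero_val g P hP l, if_neg (by omega)]
      ring

include hP in
lemma hK (hg0 : g 0 = 1) (m : ℤ) (N : ℕ) : Vfun P m (-m) N = if N = 0 then 1 else 0 := by
  suffices h : ∀ j : ℤ, Vfun P j (-j) N = Vfun P 0 0 N by
    rw [h m, V00 g P hP]
  intro j
  induction j using Int.induction_on with
  | zero => norm_num
  | succ k ih =>
    calc Vfun P ((k:ℤ)+1) (-((k:ℤ)+1)) N = Vfun P k (-((k:ℤ)+1)+1) N :=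
          Vshift g P hP hg0 k (-((k:ℤ)+1)) N
      _ = Vfun P k (-(k:ℤ)) N := by norm_num
      _ = _ := ih
  | pred k ih =>
    calc Vfun P (-(k:ℤ)-1) (-(-(k:ℤ)-1)) N = Vfun P (-(k:ℤ)-1) ((k:ℤ)+1) N := by congr 1; ring
      _ = Vfun P ((-(k:ℤ)-1)+1) (k:ℤ) N := (Vshift g P hP hg0 (-(k:ℤ)-1) (k:ℤ) N).symm
      _ = Vfun P (-(k:ℤ)) (-(-(k:ℤ))) N := by norm_num
      _ = _ := ih
end

lemma main_step (P : ℤ → ℕ → ℝ) (a b : ℕ → ℝ) (p q : ℤ)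
    (hV : ∀ N, Vfun P p q N = if N = 0 then 1 else 0)
    (hab : ∀ i : ℕ, 1 ≤ i →
      a i = ∑ j ∈ range i, ((i-1).choose j : ℝ) * b (j+1) * P p (i-1-j))
    (i : ℕ) (hi : 1 ≤ i) :
    b i = ∑ j ∈ range i, ((i-1).choose j : ℝ) * a (j+1) * P q (i-1-j) := by
  obtain ⟨n, rfl⟩ : ∃ n, i = n + 1 := ⟨i - 1, by omega⟩
  simp only [Nat.add_sub_cancel]
  symm
  calc ∑ j ∈ range (n+1), (n.choose j : ℝ) * a (j+1) * P q (n-j)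
      = ∑ j ∈ range (n+1), ∑ k ∈ range (j+1),
          ((n.choose j : ℝ) * ((j.choose k : ℝ) * b (k+1) * P p (j-k))) * P q (n-j) := by
        apply Finset.sum_congr rfl
        intro j _
        rw [hab (j+1) (by omega)]
        simp only [Nat.add_sub_cancel]
        rw [Finset.mul_sum, Finset.sum_mul]
    _ = ∑ k ∈ range (n+1), ∑ u ∈ range (n+1-k),
          ((n.choose (k+u) : ℝ) * (((k+u).choose k : ℝ) * b (k+1) * P p (k+u-k))) *
            P q (n-(k+u)) := triangle1 n _
    _ = ∑ k ∈ range (n+1), (n.choose k : ℝ) * b (k+1) * Vfun P p q (n-k) := by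
        apply Finset.sum_congr rfl
        intro k hk
        have hkn : k ≤ n := by simp only [Finset.mem_range] at hk; omega
        have hr : n + 1 - k = (n - k) + 1 := by omega
        rw [hr]
        unfold Vfun
        rw [Finset.mul_sum]
        apply Finset.sum_congr rfl
        intro u hu
        have hu' : u ≤ n - k := by simp only [Finset.mem_range] at hu; omega
        have hch : n.choose (k+u) * ((k+u).choose k) = n.choose k * ((n-k).choose u) := by
          have := Nat.choose_mul (n := n) (show k ≤ k + u by omega)
          simpa [Nat.add_sub_cancel_left] using this
        have hc : ((n.choose (k+u) * ((k+u).choose k) : ℕ) : ℝ)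
            = ((n.choose k * ((n-k).choose u) : ℕ) : ℝ) := by
          exact_mod_cast congrArg (fun x : ℕ => (x:ℝ)) hch
        push_cast at hc
        have e1 : k + u - k = u := by omega
        have e2 : n - (k+u) = (n-k) - u := by omega
        rw [e1, e2]
        linear_combination (b (k+1) * P p u * P q ((n-k) - u)) * hc
    _ = b (n+1) := by
        rw [Finset.sum_eq_single n]
        · rw [Nat.sub_self, hV 0]
          simp
        · intro k hk hkn
          rw [hV (n-k), if_neg (by simp only [Finset.mem_range] at hk; omega)]
          ring
        · intro h
          exact absurd (Finset.self_mem_range_succ n) h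

/-- First Abel inversion theorem: with
`P_s^{(p)}(g) = ∑_{μ ⊢ s} (p)_{ν_μ} d_μ g_μ` (so `P_0^{(p)}(g) = 1`), one has
`a_i = ∑_{j=0}^{i−1} binom(i−1,j) g_{j+1} P^{(m)}_{i−1−j}(g)` for all `i ≥ 1` if and only if
`g_i = ∑_{j=0}^{i−1} binom(i−1,j) a_{j+1} P^{(−m)}_{i−1−j}(g)` for all `i ≥ 1`. -/
theorem first_abel_inversion (a g : ℕ → ℝ) (ha0 : a 0 = 1) (hg0 : g 0 = 1) (m : ℤ)
    (P : ℤ → ℕ → ℝ)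
    (hP : ∀ (p : ℤ) (s : ℕ), P p s = ∑ mu : Nat.Partition s,
      (descPochhammer ℝ mu.parts.card).eval ((p : ℝ)) * dcoef mu * (mu.parts.map g).prod) :
    (∀ i : ℕ, 1 ≤ i →
        a i = ∑ j ∈ Finset.range i, ((i - 1).choose j : ℝ) * g (j + 1) * P m (i - 1 - j))
      ↔ (∀ i : ℕ, 1 ≤ i →
        g i = ∑ j ∈ Finset.range i, ((i - 1).choose j : ℝ) * a (j + 1) * P (-m) (i - 1 - j)) := by
  constructor
  · intro h1 i hi
    exact main_step P a g m (-m) (hK g P hP hg0 m) h1 i hi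
  · intro h2 i hi
    have hV : ∀ N, Vfun P (-m) m N = if N = 0 then 1 else 0 := by
      intro N
      have h := hK g P hP hg0 (-m) N
      rwa [neg_neg] at h
    exact main_step P g a (-m) m hV h2 i hi
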